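/- Let T_t^Dir be the Dirichlet heat semigroup on (0,∞): (T_t^Dir g)(x) = (4πt)^{-1/2} ∫_0^∞ [e^{-(x−y)²/(4t)} − e^{-(x+y)²/(4t)}] g(y) dy. For α > 0, define (T̃_t^α g)(x) = (4πt)^{-1/2} e^{2αx} ∫_x^∞ e^{-2αz} ∫_0^∞ [((z−y+4αt)/(2t)) e^{-(z−y)²/(4t)} + ((z+y−4αt)/(2t)) e^{-(z+y)²/(4t)}] g(y) dy dz. Then for every bounded continuous g : (0,∞) → ℝ with compact support, every t > 0 and x > 0, lim_{α→∞} (T̃_t^α g)(x) = (T_t^Dir g)(x). -/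

import Mathlib

open Real MeasureTheory Set Filter Topology

/-- Dirichlet heat semigroup on the half-line. -/
noncomputable def TDir (t : ℝ) (g : ℝ → ℝ) (x : ℝ) : ℝ :=
  ∫ y in Set.Ioi (0 : ℝ),
    (Real.exp (-(x - y) ^ 2 / (4 * t)) - Real.exp (-(x + y) ^ 2 / (4 * t)))
      * g y / Real.sqrt (4 * Real.pi * t)

/-- The semigroup associated to the Robin problem on the half-line. -/
noncomputable def Ttilde (α t : ℝ) (g : ℝ → ℝ) (x : ℝ) : ℝ :=
  Real.exp (2 * α * x) *
    ∫ z in Set.Ici x, Real.exp (-2 * α * z) *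
      (∫ y in Set.Ioi (0 : ℝ),
        (((z - y + 4 * α * t) / (2 * t)) * Real.exp (-(z - y) ^ 2 / (4 * t))
          + ((z + y - 4 * α * t) / (2 * t)) * Real.exp (-(z + y) ^ 2 / (4 * t)))
        * g y) / Real.sqrt (4 * Real.pi * t)

lemma aux_linexp {a b : ℝ} (ha : 0 ≤ a) (hb : 0 < b) :
    IntegrableOn (fun z => z * Real.exp (-(b * z))) (Ioi a) := by
  have hint : IntegrableOn (fun z => (2 / b) * Real.exp (-(b / 2) * z)) (Ioi a) :=
    (exp_neg_integrableOn_Ioi a (by positivity)).const_mul _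
  refine Integrable.mono' hint ?_ ?_
  · exact (continuous_id.mul (by continuity)).aestronglyMeasurable
  · filter_upwards [ae_restrict_mem measurableSet_Ioi] with z hz
    have hz0 : 0 ≤ z := le_trans ha (le_of_lt hz)
    have h1 : b / 2 * z * Real.exp (-(b / 2 * z)) ≤ 1 := by
      have := Real.add_one_le_exp (b / 2 * z)
      have he : 0 < Real.exp (b / 2 * z) := Real.exp_pos _
      rw [Real.exp_neg]
      rw [mul_inv_le_iff₀ he, one_mul]
      nlinarith
    have hsplit : Real.exp (-(b * z)) = Real.exp (-(b / 2 * z)) * Real.exp (-(b / 2) * z) := by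
      rw [← Real.exp_add]; ring_nf
    rw [Real.norm_eq_abs, abs_of_nonneg (by positivity)]
    rw [hsplit, ← mul_assoc]
    have h2 : z * Real.exp (-(b / 2 * z)) ≤ 2 / b := by
      rw [div_eq_mul_inv, ← mul_le_mul_iff_of_pos_left (show (0:ℝ) < b/2 by positivity)]
      calc b / 2 * (z * Real.exp (-(b / 2 * z))) = b / 2 * z * Real.exp (-(b / 2 * z)) := by ring
        _ ≤ 1 := h1
        _ = b / 2 * (2 * b⁻¹) := by field_simp
    exact mul_le_mul_of_nonneg_right h2 (Real.exp_nonneg _) |>.trans_eq rfl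

lemma exp_sq_le_one {a t : ℝ} (ht : 0 < t) : Real.exp (-a ^ 2 / (4 * t)) ≤ 1 :=
  Real.exp_le_one_iff.2 (div_nonpos_iff.2 (Or.inr ⟨neg_nonpos.2 (sq_nonneg a), by positivity⟩))

lemma intE2 {t x α y : ℝ} (ht : 0 < t) (hα : 0 < α) :
    IntegrableOn (fun z => Real.exp (-2 * α * z) * Real.exp (-(z + y) ^ 2 / (4 * t))) (Ioi x) := by
  refine Integrable.mono' (exp_neg_integrableOn_Ioi x (by positivity : (0:ℝ) < 2 * α)) ?_ ?_
  · exact (Continuous.mul (by continuity) (by continuity)).aestronglyMeasurable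
  · filter_upwards with z
    rw [Real.norm_eq_abs, abs_of_nonneg (by positivity)]
    have : Real.exp (-(z + y) ^ 2 / (4 * t)) ≤ 1 := exp_sq_le_one ht
    calc Real.exp (-2 * α * z) * Real.exp (-(z + y) ^ 2 / (4 * t))
        ≤ Real.exp (-2 * α * z) * 1 := by
          exact mul_le_mul_of_nonneg_left this (Real.exp_nonneg _)
      _ = Real.exp (-(2 * α) * z) := by rw [mul_one]; ring_nf

lemma hasDeriv_aux (t α y : ℝ) (ht : 0 < t) (z : ℝ) :
    HasDerivAt
      (fun z => -(Real.exp (-2 * α * z) *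
        (Real.exp (-(z - y) ^ 2 / (4 * t)) + Real.exp (-(z + y) ^ 2 / (4 * t)))))
      (Real.exp (-2 * α * z) *
        (((z - y + 4 * α * t) / (2 * t)) * Real.exp (-(z - y) ^ 2 / (4 * t))
          + ((z + y - 4 * α * t) / (2 * t)) * Real.exp (-(z + y) ^ 2 / (4 * t)))
        + 4 * α * (Real.exp (-2 * α * z) * Real.exp (-(z + y) ^ 2 / (4 * t)))) z := by
  have hE : HasDerivAt (fun z => Real.exp (-2 * α * z)) (Real.exp (-2 * α * z) * (-2 * α)) z := by
    have h0 : HasDerivAt (fun z : ℝ => -2 * α * z) (-2 * α) z := by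
      simpa using (hasDerivAt_id z).const_mul (-2 * α)
    exact h0.exp
  have h1 : HasDerivAt (fun z => Real.exp (-(z - y) ^ 2 / (4 * t)))
      (Real.exp (-(z - y) ^ 2 / (4 * t)) * (-(2 * (z - y) ^ 1 * 1) / (4 * t))) z := by
    have hp : HasDerivAt (fun z : ℝ => (z - y) ^ 2) ((2 : ℕ) * (z - y) ^ 1 * 1) z :=
      ((hasDerivAt_id z).sub_const y).pow 2
    have := (hp.neg.div_const (4 * t)).exp
    simpa using this
  have h2 : HasDerivAt (fun z => Real.exp (-(z + y) ^ 2 / (4 * t)))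
      (Real.exp (-(z + y) ^ 2 / (4 * t)) * (-(2 * (z + y) ^ 1 * 1) / (4 * t))) z := by
    have hp : HasDerivAt (fun z : ℝ => (z + y) ^ 2) ((2 : ℕ) * (z + y) ^ 1 * 1) z :=
      ((hasDerivAt_id z).add_const y).pow 2
    have := (hp.neg.div_const (4 * t)).exp
    simpa using this
  have h := (hE.mul (h1.add h2)).neg
  refine h.congr_deriv ?_
  simp only [Pi.add_apply]
  have ht' : (4 : ℝ) * t ≠ 0 := by positivity
  field_simp
  ring

lemma zint (t x α y : ℝ) (ht : 0 < t) (hx : 0 < x) (hα : 0 < α) :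
    ∫ z in Ioi x, Real.exp (-2 * α * z) *
      (((z - y + 4 * α * t) / (2 * t)) * Real.exp (-(z - y) ^ 2 / (4 * t))
        + ((z + y - 4 * α * t) / (2 * t)) * Real.exp (-(z + y) ^ 2 / (4 * t)))
    = Real.exp (-2 * α * x) *
        (Real.exp (-(x - y) ^ 2 / (4 * t)) + Real.exp (-(x + y) ^ 2 / (4 * t)))
      - 4 * α * ∫ z in Ioi x, Real.exp (-2 * α * z) * Real.exp (-(z + y) ^ 2 / (4 * t)) := by
  have hexp : ∀ z : ℝ, Real.exp (-(2 * α * z)) = Real.exp (-2 * α * z) := fun z => by ring_nf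
  have hexp2 : ∀ z : ℝ, Real.exp (-(2 * α) * z) = Real.exp (-2 * α * z) := fun z => by ring_nf
  set f : ℝ → ℝ := fun z => -(Real.exp (-2 * α * z) *
      (Real.exp (-(z - y) ^ 2 / (4 * t)) + Real.exp (-(z + y) ^ 2 / (4 * t)))) with hf
  set f' : ℝ → ℝ := fun z => Real.exp (-2 * α * z) *
      (((z - y + 4 * α * t) / (2 * t)) * Real.exp (-(z - y) ^ 2 / (4 * t))
        + ((z + y - 4 * α * t) / (2 * t)) * Real.exp (-(z + y) ^ 2 / (4 * t)))
      + 4 * α * (Real.exp (-2 * α * z) * Real.exp (-(z + y) ^ 2 / (4 * t))) with hf'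
  have hderiv : ∀ z ∈ Ici x, HasDerivAt f (f' z) z := fun z _ => hasDeriv_aux t α y ht z
  have f'int : IntegrableOn f' (Ioi x) := by
    have i1 : IntegrableOn (fun z => (1 / t) * (z * Real.exp (-2 * α * z))) (Ioi x) := by
      have := (aux_linexp hx.le (by positivity : (0:ℝ) < 2 * α)).const_mul (1 / t)
      simp only [hexp] at this
      exact this
    have i2 : IntegrableOn
        (fun z => ((|y| + 4 * α * t) / t + 4 * α) * Real.exp (-2 * α * z)) (Ioi x) := by
      have := (exp_neg_integrableOn_Ioi x
        (by positivity : (0:ℝ) < 2 * α)).const_mul ((|y| + 4 * α * t) / t + 4 * α)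
      simp only [hexp2] at this
      exact this
    refine Integrable.mono' (i1.add i2) ?_ ?_
    · apply Continuous.aestronglyMeasurable; rw [hf']; fun_prop
    · filter_upwards [ae_restrict_mem measurableSet_Ioi] with z hz
      have hz0 : 0 < z := lt_trans hx hz
      have hE : (0:ℝ) < Real.exp (-2 * α * z) := Real.exp_pos _
      have he1 : Real.exp (-(z - y) ^ 2 / (4 * t)) ≤ 1 := exp_sq_le_one ht
      have he2 : Real.exp (-(z + y) ^ 2 / (4 * t)) ≤ 1 := exp_sq_le_one ht
      have he1' : (0:ℝ) ≤ Real.exp (-(z - y) ^ 2 / (4 * t)) := Real.exp_nonneg _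
      have he2' : (0:ℝ) ≤ Real.exp (-(z + y) ^ 2 / (4 * t)) := Real.exp_nonneg _
      have htri : ∀ w : ℝ, |z + w| ≤ z + |y| + 4 * α * t →
          True := fun _ _ => trivial
      have hA1 : |(z - y + 4 * α * t) / (2 * t)| ≤ (z + |y| + 4 * α * t) / (2 * t) := by
        rw [abs_div, abs_of_pos (by positivity : (0:ℝ) < 2 * t)]
        apply div_le_div_of_nonneg_right ?_ (by positivity)
        apply abs_le.2
        constructor <;> nlinarith [le_abs_self y, neg_abs_le y]
      have hA2 : |(z + y - 4 * α * t) / (2 * t)| ≤ (z + |y| + 4 * α * t) / (2 * t) := by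
        rw [abs_div, abs_of_pos (by positivity : (0:ℝ) < 2 * t)]
        apply div_le_div_of_nonneg_right ?_ (by positivity)
        apply abs_le.2
        constructor <;> nlinarith [le_abs_self y, neg_abs_le y]
      have hB : |((z - y + 4 * α * t) / (2 * t)) * Real.exp (-(z - y) ^ 2 / (4 * t))
          + ((z + y - 4 * α * t) / (2 * t)) * Real.exp (-(z + y) ^ 2 / (4 * t))|
          ≤ (z + |y| + 4 * α * t) / t := by
        calc |((z - y + 4 * α * t) / (2 * t)) * Real.exp (-(z - y) ^ 2 / (4 * t))
            + ((z + y - 4 * α * t) / (2 * t)) * Real.exp (-(z + y) ^ 2 / (4 * t))|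
            ≤ |(z - y + 4 * α * t) / (2 * t)| * Real.exp (-(z - y) ^ 2 / (4 * t))
              + |(z + y - 4 * α * t) / (2 * t)| * Real.exp (-(z + y) ^ 2 / (4 * t)) := by
              refine (abs_add_le _ _).trans ?_
              rw [abs_mul, abs_mul, abs_of_nonneg he1', abs_of_nonneg he2']
          _ ≤ ((z + |y| + 4 * α * t) / (2 * t)) * 1 + ((z + |y| + 4 * α * t) / (2 * t)) * 1 := by
              gcongr
          _ = (z + |y| + 4 * α * t) / t := by field_simp; ring
      calc ‖f' z‖ ≤ Real.exp (-2 * α * z) *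
            |((z - y + 4 * α * t) / (2 * t)) * Real.exp (-(z - y) ^ 2 / (4 * t))
              + ((z + y - 4 * α * t) / (2 * t)) * Real.exp (-(z + y) ^ 2 / (4 * t))|
            + 4 * α * (Real.exp (-2 * α * z) * Real.exp (-(z + y) ^ 2 / (4 * t))) := by
            rw [hf', Real.norm_eq_abs]
            refine (abs_add_le _ _).trans ?_
            have h4 : (0:ℝ) ≤ 4 * α * (Real.exp (-2 * α * z) * Real.exp (-(z + y) ^ 2 / (4 * t))) :=
              mul_nonneg (by linarith) (by positivity)
            rw [abs_mul, abs_of_pos hE, abs_of_nonneg h4]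
        _ ≤ Real.exp (-2 * α * z) * ((z + |y| + 4 * α * t) / t)
            + 4 * α * (Real.exp (-2 * α * z) * 1) := by gcongr
        _ = (1 / t) * (z * Real.exp (-2 * α * z))
            + ((|y| + 4 * α * t) / t + 4 * α) * Real.exp (-2 * α * z) := by
            field_simp; ring
  have htend : Tendsto f atTop (𝓝 0) := by
    have hg : Tendsto (fun z : ℝ => 2 * Real.exp (-(2 * α * z))) atTop (𝓝 0) := by
      have h1 : Tendsto (fun z : ℝ => 2 * α * z) atTop atTop :=
        Tendsto.const_mul_atTop (by positivity) tendsto_id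
      have h2 := (Real.tendsto_exp_neg_atTop_nhds_zero).comp h1
      have h3 := h2.const_mul (2 : ℝ)
      simpa using h3
    have hb : ∀ z : ℝ, ‖f z‖ ≤ 2 * Real.exp (-(2 * α * z)) := by
      intro z
      have he1 : Real.exp (-(z - y) ^ 2 / (4 * t)) ≤ 1 := exp_sq_le_one ht
      have he2 : Real.exp (-(z + y) ^ 2 / (4 * t)) ≤ 1 := exp_sq_le_one ht
      have he1' : (0:ℝ) ≤ Real.exp (-(z - y) ^ 2 / (4 * t)) := Real.exp_nonneg _
      have he2' : (0:ℝ) ≤ Real.exp (-(z + y) ^ 2 / (4 * t)) := Real.exp_nonneg _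
      have hE : (0:ℝ) < Real.exp (-2 * α * z) := Real.exp_pos _
      rw [hf, Real.norm_eq_abs, abs_neg, abs_of_nonneg (by positivity), hexp]
      nlinarith
    exact squeeze_zero_norm hb hg
  have key : ∫ z in Ioi x, f' z = 0 - f x :=
    integral_Ioi_of_hasDerivAt_of_tendsto' hderiv f'int htend
  have i3 : IntegrableOn
      (fun z => Real.exp (-2 * α * z) * Real.exp (-(z + y) ^ 2 / (4 * t))) (Ioi x) :=
    intE2 ht hα
  have heq : ∀ z : ℝ, Real.exp (-2 * α * z) *
      (((z - y + 4 * α * t) / (2 * t)) * Real.exp (-(z - y) ^ 2 / (4 * t))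
        + ((z + y - 4 * α * t) / (2 * t)) * Real.exp (-(z + y) ^ 2 / (4 * t)))
      = f' z - 4 * α * (Real.exp (-2 * α * z) * Real.exp (-(z + y) ^ 2 / (4 * t))) := by
    intro z; rw [hf']; ring
  calc ∫ z in Ioi x, Real.exp (-2 * α * z) *
      (((z - y + 4 * α * t) / (2 * t)) * Real.exp (-(z - y) ^ 2 / (4 * t))
        + ((z + y - 4 * α * t) / (2 * t)) * Real.exp (-(z + y) ^ 2 / (4 * t)))
      = ∫ z in Ioi x, (f' z
          - 4 * α * (Real.exp (-2 * α * z) * Real.exp (-(z + y) ^ 2 / (4 * t)))) := by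
        exact integral_congr_ae (Filter.Eventually.of_forall fun z => heq z)
    _ = (∫ z in Ioi x, f' z)
        - ∫ z in Ioi x, 4 * α * (Real.exp (-2 * α * z) * Real.exp (-(z + y) ^ 2 / (4 * t))) :=
        integral_sub f'int (i3.const_mul _)
    _ = (0 - f x) - 4 * α *
        ∫ z in Ioi x, Real.exp (-2 * α * z) * Real.exp (-(z + y) ^ 2 / (4 * t)) := by
        rw [key, integral_const_mul]
    _ = Real.exp (-2 * α * x) *
        (Real.exp (-(x - y) ^ 2 / (4 * t)) + Real.exp (-(x + y) ^ 2 / (4 * t)))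
      - 4 * α * ∫ z in Ioi x, Real.exp (-2 * α * z) * Real.exp (-(z + y) ^ 2 / (4 * t)) := by
        rw [hf]; ring

lemma subst (t x α y : ℝ) (ht : 0 < t) (hα : 0 < α) :
    4 * α * Real.exp (2 * α * x) *
      ∫ z in Ioi x, Real.exp (-2 * α * z) * Real.exp (-(z + y) ^ 2 / (4 * t))
    = 2 * ∫ v in Ioi 0, Real.exp (-v) * Real.exp (-(x + v / (2 * α) + y) ^ 2 / (4 * t)) := by
  have h2α : (0:ℝ) < 2 * α := by positivity
  set F : ℝ → ℝ := fun z => Real.exp (-2 * α * z) * Real.exp (-(z + y) ^ 2 / (4 * t)) with hF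
  set G : ℝ → ℝ := fun v =>
    Real.exp (-v) * Real.exp (-(x + v / (2 * α) + y) ^ 2 / (4 * t)) with hG
  have hshift : ∫ z in Ioi x, F z = ∫ u in Ioi (0:ℝ), F (u + x) := by
    have hmp : MeasurePreserving (fun u : ℝ => u + x) volume volume :=
      measurePreserving_add_right volume x
    have hemb : MeasurableEmbedding (fun u : ℝ => u + x) := by
      simpa using (MeasurableEquiv.addRight x).measurableEmbedding
    have h := hmp.setIntegral_preimage_emb hemb F (Ioi x)
    have hpre : (fun u : ℝ => u + x) ⁻¹' (Ioi x) = Ioi 0 := by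
      ext u; simp [mem_Ioi]
    rw [hpre] at h
    exact h.symm
  have hscale : ∫ u in Ioi (0:ℝ), G (2 * α * u) = (2 * α)⁻¹ * ∫ v in Ioi (0:ℝ), G v := by
    have h := integral_comp_mul_left_Ioi G 0 h2α
    simpa [mul_zero, smul_eq_mul] using h
  have hFG : ∀ u : ℝ, Real.exp (2 * α * x) * F (u + x) = G (2 * α * u) := by
    intro u
    rw [hF, hG]
    simp only
    rw [← mul_assoc, ← Real.exp_add]
    rw [mul_div_cancel_left₀ u (ne_of_gt h2α)]
    congr 2 <;> ring
  calc 4 * α * Real.exp (2 * α * x) * ∫ z in Ioi x, F z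
      = 4 * α * (Real.exp (2 * α * x) * ∫ u in Ioi (0:ℝ), F (u + x)) := by
        rw [hshift]; ring
    _ = 4 * α * ∫ u in Ioi (0:ℝ), Real.exp (2 * α * x) * F (u + x) := by
        rw [integral_const_mul]
    _ = 4 * α * ∫ u in Ioi (0:ℝ), G (2 * α * u) := by
        congr 1
        exact integral_congr_ae (Filter.Eventually.of_forall fun u => hFG u)
    _ = 4 * α * ((2 * α)⁻¹ * ∫ v in Ioi (0:ℝ), G v) := by rw [hscale]
    _ = 2 * ∫ v in Ioi (0:ℝ), G v := by
        field_simp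
        ring

lemma expneg_int : IntegrableOn (fun v : ℝ => Real.exp (-v)) (Ioi (0:ℝ)) := by
  simpa using exp_neg_integrableOn_Ioi 0 one_pos

lemma Slim (t x y : ℝ) (ht : 0 < t) :
    Tendsto (fun α : ℝ => 2 * ∫ v in Ioi (0:ℝ),
        Real.exp (-v) * Real.exp (-(x + v / (2 * α) + y) ^ 2 / (4 * t)))
      atTop (𝓝 (2 * Real.exp (-(x + y) ^ 2 / (4 * t)))) := by
  have key : Tendsto (fun α : ℝ => ∫ v in Ioi (0:ℝ),
      Real.exp (-v) * Real.exp (-(x + v / (2 * α) + y) ^ 2 / (4 * t)))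
      atTop (𝓝 (∫ v in Ioi (0:ℝ), Real.exp (-v) * Real.exp (-(x + y) ^ 2 / (4 * t)))) := by
    apply tendsto_integral_filter_of_dominated_convergence (fun v => Real.exp (-v))
    · filter_upwards with α
      apply Continuous.aestronglyMeasurable
      fun_prop
    · filter_upwards with α
      filter_upwards with v
      rw [Real.norm_eq_abs, abs_of_nonneg (by positivity)]
      calc Real.exp (-v) * Real.exp (-(x + v / (2 * α) + y) ^ 2 / (4 * t))
          ≤ Real.exp (-v) * 1 :=
            mul_le_mul_of_nonneg_left (exp_sq_le_one ht) (Real.exp_nonneg _)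
        _ = Real.exp (-v) := mul_one _
    · exact expneg_int
    · filter_upwards with v
      have h0 : Tendsto (fun α : ℝ => x + v / (2 * α) + y) atTop (𝓝 (x + 0 + y)) := by
        refine (tendsto_const_nhds.add ?_).add tendsto_const_nhds
        exact tendsto_const_nhds.div_atTop (Tendsto.const_mul_atTop two_pos tendsto_id)
      have hc : Continuous (fun w : ℝ => Real.exp (-v) * Real.exp (-w ^ 2 / (4 * t))) := by
        fun_prop
      have := (hc.tendsto (x + 0 + y)).comp h0
      simpa [add_zero, Function.comp_def] using this
  have hval : ∫ v in Ioi (0:ℝ), Real.exp (-v) * Real.exp (-(x + y) ^ 2 / (4 * t))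
      = Real.exp (-(x + y) ^ 2 / (4 * t)) := by
    rw [integral_mul_const, integral_exp_neg_Ioi_zero, one_mul]
  rw [hval] at key
  exact key.const_mul 2

lemma fubini_step (t x α : ℝ) (ht : 0 < t) (hx : 0 < x) (hα : 0 < α)
    (g : ℝ → ℝ) (hgc : Continuous g) (hgs : HasCompactSupport g) :
    ∫ z in Ioi x, ∫ y in Ioi (0:ℝ), Real.exp (-2 * α * z) *
      ((((z - y + 4 * α * t) / (2 * t)) * Real.exp (-(z - y) ^ 2 / (4 * t))
        + ((z + y - 4 * α * t) / (2 * t)) * Real.exp (-(z + y) ^ 2 / (4 * t))) * g y)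
    = ∫ y in Ioi (0:ℝ), ∫ z in Ioi x, Real.exp (-2 * α * z) *
      ((((z - y + 4 * α * t) / (2 * t)) * Real.exp (-(z - y) ^ 2 / (4 * t))
        + ((z + y - 4 * α * t) / (2 * t)) * Real.exp (-(z + y) ^ 2 / (4 * t))) * g y) := by
  have hexp : ∀ z : ℝ, Real.exp (-(2 * α * z)) = Real.exp (-2 * α * z) := fun z => by ring_nf
  have hexp2 : ∀ z : ℝ, Real.exp (-(2 * α) * z) = Real.exp (-2 * α * z) := fun z => by ring_nf
  apply MeasureTheory.integral_integral_swap
  have hgi : Integrable (fun y => |g y|) (volume.restrict (Ioi (0:ℝ))) :=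
    ((hgc.integrable_of_hasCompactSupport hgs).abs).integrableOn
  have hygi : Integrable (fun y => y * |g y|) (volume.restrict (Ioi (0:ℝ))) := by
    refine (Continuous.integrable_of_hasCompactSupport (by fun_prop) ?_).integrableOn
    exact (hgs.abs).mul_left
  have hz1 : Integrable (fun z => (1 / t) * (z * Real.exp (-2 * α * z)))
      (volume.restrict (Ioi x)) := by
    have := (aux_linexp hx.le (by positivity : (0:ℝ) < 2 * α)).const_mul (1 / t)
    simpa only [hexp] using this
  have hz2 : Integrable (fun z => 4 * α * Real.exp (-2 * α * z))
      (volume.restrict (Ioi x)) := by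
    have := (exp_neg_integrableOn_Ioi x (by positivity : (0:ℝ) < 2 * α)).const_mul (4 * α)
    simpa only [hexp2] using this
  have hz3 : Integrable (fun z => (1 / t) * Real.exp (-2 * α * z))
      (volume.restrict (Ioi x)) := by
    have := (exp_neg_integrableOn_Ioi x (by positivity : (0:ℝ) < 2 * α)).const_mul (1 / t)
    simpa only [hexp2] using this
  have hbint : Integrable (fun p : ℝ × ℝ =>
      ((1 / t) * (p.1 * Real.exp (-2 * α * p.1))) * |g p.2|
      + (4 * α * Real.exp (-2 * α * p.1)) * |g p.2|
      + ((1 / t) * Real.exp (-2 * α * p.1)) * (p.2 * |g p.2|))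
      ((volume.restrict (Ioi x)).prod (volume.restrict (Ioi (0:ℝ)))) :=
    ((hz1.mul_prod hgi).add (hz2.mul_prod hgi)).add (hz3.mul_prod hygi)
  refine Integrable.mono' hbint ?_ ?_
  · apply Continuous.aestronglyMeasurable
    fun_prop
  · rw [Measure.prod_restrict]
    filter_upwards [ae_restrict_mem (measurableSet_Ioi.prod measurableSet_Ioi)] with p hp
    obtain ⟨hp1, hp2⟩ := hp
    set z := p.1
    set y := p.2
    have hz0 : 0 < z := lt_trans hx hp1
    have hy0 : 0 < y := hp2
    have hE : (0:ℝ) < Real.exp (-2 * α * z) := Real.exp_pos _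
    have he1 : Real.exp (-(z - y) ^ 2 / (4 * t)) ≤ 1 := exp_sq_le_one ht
    have he2 : Real.exp (-(z + y) ^ 2 / (4 * t)) ≤ 1 := exp_sq_le_one ht
    have he1' : (0:ℝ) ≤ Real.exp (-(z - y) ^ 2 / (4 * t)) := Real.exp_nonneg _
    have he2' : (0:ℝ) ≤ Real.exp (-(z + y) ^ 2 / (4 * t)) := Real.exp_nonneg _
    have hA1 : |(z - y + 4 * α * t) / (2 * t)| ≤ (z + y + 4 * α * t) / (2 * t) := by
      rw [abs_div, abs_of_pos (by positivity : (0:ℝ) < 2 * t)]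
      apply div_le_div_of_nonneg_right ?_ (by positivity)
      apply abs_le.2
      constructor <;> nlinarith
    have hA2 : |(z + y - 4 * α * t) / (2 * t)| ≤ (z + y + 4 * α * t) / (2 * t) := by
      rw [abs_div, abs_of_pos (by positivity : (0:ℝ) < 2 * t)]
      apply div_le_div_of_nonneg_right ?_ (by positivity)
      apply abs_le.2
      constructor <;> nlinarith
    have hB : |((z - y + 4 * α * t) / (2 * t)) * Real.exp (-(z - y) ^ 2 / (4 * t))
        + ((z + y - 4 * α * t) / (2 * t)) * Real.exp (-(z + y) ^ 2 / (4 * t))|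
        ≤ (z + y + 4 * α * t) / t := by
      calc |((z - y + 4 * α * t) / (2 * t)) * Real.exp (-(z - y) ^ 2 / (4 * t))
          + ((z + y - 4 * α * t) / (2 * t)) * Real.exp (-(z + y) ^ 2 / (4 * t))|
          ≤ |(z - y + 4 * α * t) / (2 * t)| * Real.exp (-(z - y) ^ 2 / (4 * t))
            + |(z + y - 4 * α * t) / (2 * t)| * Real.exp (-(z + y) ^ 2 / (4 * t)) := by
            refine (abs_add_le _ _).trans ?_
            rw [abs_mul, abs_mul, abs_of_nonneg he1', abs_of_nonneg he2']
        _ ≤ ((z + y + 4 * α * t) / (2 * t)) * 1 + ((z + y + 4 * α * t) / (2 * t)) * 1 := by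
            gcongr
        _ = (z + y + 4 * α * t) / t := by field_simp; ring
    rw [Function.uncurry_def]
    simp only
    rw [Real.norm_eq_abs, abs_mul, abs_mul, abs_of_pos hE]
    calc Real.exp (-2 * α * z) *
        (|((z - y + 4 * α * t) / (2 * t)) * Real.exp (-(z - y) ^ 2 / (4 * t))
          + ((z + y - 4 * α * t) / (2 * t)) * Real.exp (-(z + y) ^ 2 / (4 * t))| * |g y|)
        ≤ Real.exp (-2 * α * z) * (((z + y + 4 * α * t) / t) * |g y|) := by
          gcongr
      _ = ((1 / t) * (z * Real.exp (-2 * α * z))) * |g y|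
          + (4 * α * Real.exp (-2 * α * z)) * |g y|
          + ((1 / t) * Real.exp (-2 * α * z)) * (y * |g y|) := by
          field_simp; ring

lemma pull_const (k c : ℝ) (h : ℝ → ℝ) (μ : Measure ℝ) :
    ∫ y, k * h y / c ∂μ = k * (∫ y, h y ∂μ) / c := by
  have he : ∀ y, k * h y / c = (k / c) * h y := fun y => by ring
  rw [integral_congr_ae (Filter.Eventually.of_forall he), integral_const_mul]
  ring

theorem Ttilde_tendsto_TDir (t x : ℝ) (ht : 0 < t) (hx : 0 < x)
    (g : ℝ → ℝ) (hgc : Continuous g) (hgs : HasCompactSupport g)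
    (hsupp : Function.support g ⊆ Set.Ioi (0 : ℝ)) :
    Tendsto (fun α : ℝ => Ttilde α t g x) atTop (𝓝 (TDir t g x)) := by
  set c : ℝ := Real.sqrt (4 * Real.pi * t) with hc
  have hcpos : 0 < c := Real.sqrt_pos.2 (by positivity)
  -- the identity for positive α
  have hid : ∀ α : ℝ, 0 < α → Ttilde α t g x =
      ∫ y in Ioi (0:ℝ),
        (Real.exp (-(x - y) ^ 2 / (4 * t)) + Real.exp (-(x + y) ^ 2 / (4 * t))
          - 2 * ∫ v in Ioi (0:ℝ),
              Real.exp (-v) * Real.exp (-(x + v / (2 * α) + y) ^ 2 / (4 * t))) * g y / c := by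
    intro α hα
    rw [Ttilde, integral_Ici_eq_integral_Ioi]
    have step1 : ∀ z : ℝ, Real.exp (-2 * α * z) *
        (∫ y in Ioi (0:ℝ),
          (((z - y + 4 * α * t) / (2 * t)) * Real.exp (-(z - y) ^ 2 / (4 * t))
            + ((z + y - 4 * α * t) / (2 * t)) * Real.exp (-(z + y) ^ 2 / (4 * t))) * g y) / c
        = (∫ y in Ioi (0:ℝ), Real.exp (-2 * α * z) *
            ((((z - y + 4 * α * t) / (2 * t)) * Real.exp (-(z - y) ^ 2 / (4 * t))
              + ((z + y - 4 * α * t) / (2 * t)) * Real.exp (-(z + y) ^ 2 / (4 * t))) * g y)) / c := by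
      intro z
      rw [integral_const_mul]
    rw [integral_congr_ae (Filter.Eventually.of_forall step1), integral_div,
      fubini_step t x α ht hx hα g hgc hgs]
    have step2 : ∀ y : ℝ, (∫ z in Ioi x, Real.exp (-2 * α * z) *
        ((((z - y + 4 * α * t) / (2 * t)) * Real.exp (-(z - y) ^ 2 / (4 * t))
          + ((z + y - 4 * α * t) / (2 * t)) * Real.exp (-(z + y) ^ 2 / (4 * t))) * g y))
        = (Real.exp (-2 * α * x) *
            (Real.exp (-(x - y) ^ 2 / (4 * t)) + Real.exp (-(x + y) ^ 2 / (4 * t)))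
          - 4 * α * ∫ z in Ioi x,
              Real.exp (-2 * α * z) * Real.exp (-(z + y) ^ 2 / (4 * t))) * g y := by
      intro y
      have hassoc : ∀ z : ℝ, Real.exp (-2 * α * z) *
          ((((z - y + 4 * α * t) / (2 * t)) * Real.exp (-(z - y) ^ 2 / (4 * t))
            + ((z + y - 4 * α * t) / (2 * t)) * Real.exp (-(z + y) ^ 2 / (4 * t))) * g y)
          = (Real.exp (-2 * α * z) *
            (((z - y + 4 * α * t) / (2 * t)) * Real.exp (-(z - y) ^ 2 / (4 * t))
              + ((z + y - 4 * α * t) / (2 * t)) * Real.exp (-(z + y) ^ 2 / (4 * t)))) * g y :=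
        fun z => by ring
      rw [integral_congr_ae (Filter.Eventually.of_forall hassoc), integral_mul_const,
        zint t x α y ht hx hα]
    rw [integral_congr_ae (Filter.Eventually.of_forall step2)]
    symm
    have step3 : ∀ y : ℝ,
        (Real.exp (-(x - y) ^ 2 / (4 * t)) + Real.exp (-(x + y) ^ 2 / (4 * t))
          - 2 * ∫ v in Ioi (0:ℝ),
              Real.exp (-v) * Real.exp (-(x + v / (2 * α) + y) ^ 2 / (4 * t))) * g y / c
        = Real.exp (2 * α * x) * ((Real.exp (-2 * α * x) *
            (Real.exp (-(x - y) ^ 2 / (4 * t)) + Real.exp (-(x + y) ^ 2 / (4 * t)))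
          - 4 * α * ∫ z in Ioi x,
              Real.exp (-2 * α * z) * Real.exp (-(z + y) ^ 2 / (4 * t))) * g y) / c := by
      intro y
      have h2 := subst t x α y ht hα
      have h1 : Real.exp (2 * α * x) * Real.exp (-2 * α * x) = 1 := by
        rw [← Real.exp_add, show 2 * α * x + -2 * α * x = 0 from by ring, Real.exp_zero]
      rw [show Real.exp (2 * α * x) * ((Real.exp (-2 * α * x) *
            (Real.exp (-(x - y) ^ 2 / (4 * t)) + Real.exp (-(x + y) ^ 2 / (4 * t)))
          - 4 * α * ∫ z in Ioi x,
              Real.exp (-2 * α * z) * Real.exp (-(z + y) ^ 2 / (4 * t))) * g y)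
        = (Real.exp (2 * α * x) * Real.exp (-2 * α * x) *
            (Real.exp (-(x - y) ^ 2 / (4 * t)) + Real.exp (-(x + y) ^ 2 / (4 * t)))
          - (4 * α * Real.exp (2 * α * x) * ∫ z in Ioi x,
              Real.exp (-2 * α * z) * Real.exp (-(z + y) ^ 2 / (4 * t)))) * g y
        from by ring, h1, one_mul, h2]
    rw [integral_congr_ae (Filter.Eventually.of_forall step3), pull_const, mul_div_assoc]
  -- now the limit
  have hgi : Integrable (fun y => |g y|) (volume.restrict (Ioi (0:ℝ))) :=
    ((hgc.integrable_of_hasCompactSupport hgs).abs).integrableOn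
  have hlim : Tendsto (fun α : ℝ => ∫ y in Ioi (0:ℝ),
      (Real.exp (-(x - y) ^ 2 / (4 * t)) + Real.exp (-(x + y) ^ 2 / (4 * t))
        - 2 * ∫ v in Ioi (0:ℝ),
            Real.exp (-v) * Real.exp (-(x + v / (2 * α) + y) ^ 2 / (4 * t))) * g y / c)
      atTop (𝓝 (TDir t g x)) := by
    rw [TDir]
    apply tendsto_integral_filter_of_dominated_convergence (fun y => 4 * |g y| / c)
    · filter_upwards with α
      apply Continuous.aestronglyMeasurable
      have hS : Continuous (fun y => ∫ v in Ioi (0:ℝ),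
          Real.exp (-v) * Real.exp (-(x + v / (2 * α) + y) ^ 2 / (4 * t))) := by
        apply continuous_of_dominated (bound := fun v => Real.exp (-v))
        · intro y
          apply Continuous.aestronglyMeasurable
          fun_prop
        · intro y
          filter_upwards with v
          rw [Real.norm_eq_abs, abs_of_nonneg (by positivity)]
          calc Real.exp (-v) * Real.exp (-(x + v / (2 * α) + y) ^ 2 / (4 * t))
              ≤ Real.exp (-v) * 1 :=
                mul_le_mul_of_nonneg_left (exp_sq_le_one ht) (Real.exp_nonneg _)
            _ = Real.exp (-v) := mul_one _
        · exact expneg_int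
        · filter_upwards with v
          fun_prop
      have hA : Continuous (fun y : ℝ =>
          Real.exp (-(x - y) ^ 2 / (4 * t)) + Real.exp (-(x + y) ^ 2 / (4 * t))) := by
        fun_prop
      exact ((hA.sub (continuous_const.mul hS)).mul hgc).div_const c
    · filter_upwards with α
      filter_upwards with y
      have hSnn : 0 ≤ ∫ v in Ioi (0:ℝ),
          Real.exp (-v) * Real.exp (-(x + v / (2 * α) + y) ^ 2 / (4 * t)) :=
        integral_nonneg fun v => by positivity
      have hSle : (∫ v in Ioi (0:ℝ),
          Real.exp (-v) * Real.exp (-(x + v / (2 * α) + y) ^ 2 / (4 * t))) ≤ 1 := by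
        rw [← integral_exp_neg_Ioi_zero]
        apply integral_mono_of_nonneg (Filter.Eventually.of_forall fun v => by positivity)
          expneg_int
        filter_upwards with v
        calc Real.exp (-v) * Real.exp (-(x + v / (2 * α) + y) ^ 2 / (4 * t))
            ≤ Real.exp (-v) * 1 :=
              mul_le_mul_of_nonneg_left (exp_sq_le_one ht) (Real.exp_nonneg _)
          _ = Real.exp (-v) := mul_one _
      have he1 : Real.exp (-(x - y) ^ 2 / (4 * t)) ≤ 1 := exp_sq_le_one ht
      have he2 : Real.exp (-(x + y) ^ 2 / (4 * t)) ≤ 1 := exp_sq_le_one ht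
      have he1' : (0:ℝ) ≤ Real.exp (-(x - y) ^ 2 / (4 * t)) := Real.exp_nonneg _
      have he2' : (0:ℝ) ≤ Real.exp (-(x + y) ^ 2 / (4 * t)) := Real.exp_nonneg _
      rw [Real.norm_eq_abs, abs_div, abs_of_pos hcpos, abs_mul]
      have habs : |Real.exp (-(x - y) ^ 2 / (4 * t)) + Real.exp (-(x + y) ^ 2 / (4 * t))
          - 2 * ∫ v in Ioi (0:ℝ),
              Real.exp (-v) * Real.exp (-(x + v / (2 * α) + y) ^ 2 / (4 * t))| ≤ 4 := by
        apply abs_le.2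
        constructor <;> nlinarith
      apply div_le_div_of_nonneg_right ?_ hcpos.le
      exact mul_le_mul_of_nonneg_right habs (abs_nonneg _)
    · exact (hgi.const_mul 4).div_const c
    · filter_upwards with y
      have hS := Slim t x y ht
      rw [← hc]
      rw [show (Real.exp (-(x - y) ^ 2 / (4 * t)) - Real.exp (-(x + y) ^ 2 / (4 * t)))
          * g y / c
        = (Real.exp (-(x - y) ^ 2 / (4 * t)) + Real.exp (-(x + y) ^ 2 / (4 * t))
          - 2 * Real.exp (-(x + y) ^ 2 / (4 * t))) * g y / c from by ring]
      exact ((tendsto_const_nhds.sub hS).mul_const (g y)).div_const c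
  refine hlim.congr' ?_
  filter_upwards [eventually_gt_atTop (0:ℝ)] with α hα
  exact (hid α hα).symm
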